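/- arXiv:2510.25059 — 2 statements merged into one kernel-verified Lean document; each statement's English description precedes it below -/
import Mathlib

section
/- For positive integers n and d, and q a complex number such that [m] ≠ 0 for all m ≥ 1: ∑_{k=1}^n (-1)^{k+1} q^{C(k,2)} qbinom(n,k) ∑_{k ≥ k_1 ≥ ... ≥ k_d ≥ 1} 1/([k_1]···[k_d]) = 1/[n]^d. -/
noncomputable def qint (q : ℂ) (m : ℕ) : ℂ := ∑ i ∈ Finset.range m, q ^ i

noncomputable def qfact (q : ℂ) : ℕ → ℂ
  | 0 => 1
  | n + 1 => qint q (n + 1) * qfact q n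

noncomputable def qbinom (q : ℂ) (n k : ℕ) : ℂ :=
  if k ≤ n then qfact q n / (qfact q k * qfact q (n - k)) else 0

/-- Weakly decreasing chains `hi ≥ f 0 ≥ f 1 ≥ ⋯ ≥ f (d-1) ≥ lo`. -/
def chainsIcc (d lo hi : ℕ) : Finset (Fin d → ℕ) :=
  (Fintype.piFinset fun _ : Fin d => Finset.Icc lo hi).filter
    fun f => ∀ i j : Fin d, i ≤ j → f j ≤ f i

lemma qint_add (q : ℂ) (a b : ℕ) : qint q (a + b) = qint q a + q ^ a * qint q b := by
  simp [qint, Finset.sum_range_add, Finset.mul_sum, pow_add]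

lemma qfact_ne_zero (q : ℂ) (hm : ∀ m : ℕ, 1 ≤ m → qint q m ≠ 0) (n : ℕ) :
    qfact q n ≠ 0 := by
  induction n with
  | zero => simp [qfact]
  | succ n ih => exact mul_ne_zero (hm _ (by omega)) ih

lemma qbinom_zero (q : ℂ) (hm : ∀ m : ℕ, 1 ≤ m → qint q m ≠ 0) (n : ℕ) :
    qbinom q n 0 = 1 := by
  simp [qbinom, qfact, div_self (qfact_ne_zero q hm n)]

lemma qbinom_big (q : ℂ) (n k : ℕ) (h : n < k) : qbinom q n k = 0 := by
  simp [qbinom, Nat.not_le.mpr h]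

lemma qfact_succ (q : ℂ) (n : ℕ) : qfact q (n + 1) = qint q (n + 1) * qfact q n := rfl

lemma qbinom_pascal (q : ℂ) (hm : ∀ m : ℕ, 1 ≤ m → qint q m ≠ 0) (n k : ℕ) :
    qbinom q (n + 1) (k + 1) = qbinom q n k + q ^ (k + 1) * qbinom q n (k + 1) := by
  rcases lt_trichotomy k n with h | rfl | h
  · obtain ⟨m, rfl⟩ : ∃ m, n = k + (m + 1) := ⟨n - k - 1, by omega⟩
    have e1 : k + (m + 1) + 1 - (k + 1) = m + 1 := by omega
    have e2 : k + (m + 1) - k = m + 1 := by omega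
    have e3 : k + (m + 1) - (k + 1) = m := by omega
    have hq : qint q (k + (m + 1) + 1) = qint q (k + 1) + q ^ (k + 1) * qint q (m + 1) := by
      rw [← qint_add]; congr 1; omega
    simp only [qbinom, if_pos (by omega : k + 1 ≤ k + (m + 1) + 1),
      if_pos (by omega : k ≤ k + (m + 1)), if_pos (by omega : k + 1 ≤ k + (m + 1)),
      e1, e2, e3, qfact_succ, hq]
    have h1 := qfact_ne_zero q hm k
    have h2 := qfact_ne_zero q hm m
    have h3 := qfact_ne_zero q hm (k + (m + 1))
    have h4 := hm (k + 1) (by omega)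
    have h5 := hm (m + 1) (by omega)
    field_simp
  · have h0 : qbinom q k (k + 1) = 0 := qbinom_big q k (k + 1) (by omega)
    have h1 : qbinom q (k + 1) (k + 1) = 1 := by
      simp [qbinom, qfact,
        div_self (mul_ne_zero (hm (k+1) (by omega)) (qfact_ne_zero q hm k))]
    have h2 : qbinom q k k = 1 := by
      simp [qbinom, qfact, div_self (qfact_ne_zero q hm k)]
    rw [h0, h1, h2]; ring
  · rw [qbinom_big q n k (by omega), qbinom_big q n (k+1) (by omega),
      qbinom_big q (n+1) (k+1) (by omega)]
    ring

lemma qbinom_absorb (q : ℂ) (hm : ∀ m : ℕ, 1 ≤ m → qint q m ≠ 0) (n k : ℕ) (h : k ≤ n) :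
    qint q (k + 1) * qbinom q (n + 1) (k + 1) = qint q (n + 1) * qbinom q n k := by
  have e1 : n + 1 - (k + 1) = n - k := by omega
  simp only [qbinom, if_pos (by omega : k + 1 ≤ n + 1), if_pos h, e1, qfact_succ]
  have h1 := qfact_ne_zero q hm k
  have h2 := qfact_ne_zero q hm n
  have h3 := qfact_ne_zero q hm (n - k)
  have h4 := hm (k + 1) (by omega)
  field_simp

lemma partial_sum (q : ℂ) (hm : ∀ m : ℕ, 1 ≤ m → qint q m ≠ 0) (n m : ℕ) :
    ∑ k ∈ Finset.range (m + 1), (-1 : ℂ) ^ k * q ^ k.choose 2 * qbinom q (n + 1) k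
      = (-1) ^ m * q ^ (m + 1).choose 2 * qbinom q n m := by
  induction m with
  | zero => simp [qbinom_zero q hm]
  | succ m ih =>
    rw [Finset.sum_range_succ, ih, qbinom_pascal q hm n m]
    have hc : (m + 2).choose 2 = (m + 1).choose 2 + (m + 1) := by
      rw [Nat.choose_succ_succ (m+1) 1, Nat.choose_one_right]; ring
    rw [hc, pow_add]
    ring

lemma tail_sum (q : ℂ) (hm : ∀ m : ℕ, 1 ≤ m → qint q m ≠ 0) (n j : ℕ) (hj : 1 ≤ j)
    (hjn : j ≤ n + 1) :
    ∑ k ∈ Finset.Icc j (n + 1), (-1 : ℂ) ^ (k + 1) * q ^ k.choose 2 * qbinom q (n + 1) k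
      = (-1) ^ (j + 1) * q ^ j.choose 2 * qbinom q n (j - 1) := by
  have hfull : ∑ k ∈ Finset.range (n + 2), (-1 : ℂ) ^ k * q ^ k.choose 2 * qbinom q (n + 1) k
      = 0 := by
    rw [partial_sum q hm n (n + 1), qbinom_big q n (n + 1) (by omega)]
    ring
  have hico : Finset.Icc j (n + 1) = Finset.Ico j (n + 2) := by
    rw [← Finset.Ico_add_one_right_eq_Icc]; rfl
  have hsplit := Finset.sum_Ico_consecutive
    (f := fun k => (-1 : ℂ) ^ k * q ^ k.choose 2 * qbinom q (n + 1) k)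
    (by omega : 0 ≤ j) (by omega : j ≤ n + 2)
  rw [Finset.range_eq_Ico] at hfull
  obtain ⟨m, rfl⟩ : ∃ m, j = m + 1 := ⟨j - 1, by omega⟩
  have hpart : ∑ k ∈ Finset.Ico 0 (m + 1), (-1 : ℂ) ^ k * q ^ k.choose 2 * qbinom q (n + 1) k
      = (-1) ^ m * q ^ (m + 1).choose 2 * qbinom q n m := by
    rw [← Finset.range_eq_Ico, partial_sum q hm n m]
  have htail : ∑ k ∈ Finset.Ico (m + 1) (n + 2),
      (-1 : ℂ) ^ k * q ^ k.choose 2 * qbinom q (n + 1) k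
      = -((-1) ^ m * q ^ (m + 1).choose 2 * qbinom q n m) := by
    have := hsplit
    rw [hpart, hfull] at this
    linear_combination this
  rw [hico]
  calc ∑ k ∈ Finset.Ico (m + 1) (n + 2),
        (-1 : ℂ) ^ (k + 1) * q ^ k.choose 2 * qbinom q (n + 1) k
      = -∑ k ∈ Finset.Ico (m + 1) (n + 2),
        (-1 : ℂ) ^ k * q ^ k.choose 2 * qbinom q (n + 1) k := by
        rw [← Finset.sum_neg_distrib]
        apply Finset.sum_congr rfl
        intro k _
        ring
    _ = (-1) ^ (m + 1 + 1) * q ^ (m + 1).choose 2 * qbinom q n (m + 1 - 1) := by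
        rw [htail, Nat.add_sub_cancel]; ring
lemma chains_zero (q : ℂ) (lo hi : ℕ) :
    ∑ f ∈ chainsIcc 0 lo hi, (∏ i, qint q (f i))⁻¹ = 1 := by
  have h : chainsIcc 0 lo hi = {finZeroElim} := by
    ext f
    simp only [chainsIcc, Finset.mem_filter, Fintype.mem_piFinset, Finset.mem_singleton]
    constructor
    · intro _; exact funext fun i => i.elim0
    · intro _; exact ⟨fun i => i.elim0, fun i => i.elim0⟩
  rw [h]
  simp

lemma mem_chains_cons {d k a : ℕ} {g : Fin d → ℕ} (ha : a ∈ Finset.Icc 1 k)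
    (hg : g ∈ chainsIcc d 1 a) : Fin.cons a g ∈ chainsIcc (d + 1) 1 k := by
  simp only [chainsIcc, Finset.mem_filter, Fintype.mem_piFinset, Finset.mem_Icc] at *
  obtain ⟨hg1, hg2⟩ := hg
  constructor
  · intro i
    rcases Fin.eq_zero_or_eq_succ i with rfl | ⟨i', rfl⟩
    · simpa using ha
    · simp only [Fin.cons_succ]
      exact ⟨(hg1 i').1, le_trans (hg1 i').2 ha.2⟩
  · intro i j hij
    rcases Fin.eq_zero_or_eq_succ i with rfl | ⟨i', rfl⟩
    · rcases Fin.eq_zero_or_eq_succ j with rfl | ⟨j', rfl⟩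
      · exact le_refl _
      · simpa using (hg1 j').2
    · rcases Fin.eq_zero_or_eq_succ j with rfl | ⟨j', rfl⟩
      · exact absurd (Fin.le_zero_iff.mp hij) (Fin.succ_ne_zero i')
      · simp only [Fin.cons_succ]
        exact hg2 i' j' (Fin.succ_le_succ_iff.mp hij)

lemma mem_chains_tail {d k : ℕ} {f : Fin (d + 1) → ℕ} (hf : f ∈ chainsIcc (d + 1) 1 k) :
    f 0 ∈ Finset.Icc 1 k ∧ Fin.tail f ∈ chainsIcc d 1 (f 0) := by
  simp only [chainsIcc, Finset.mem_filter, Fintype.mem_piFinset, Finset.mem_Icc] at *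
  obtain ⟨hf1, hf2⟩ := hf
  refine ⟨hf1 0, ⟨fun i => ⟨(hf1 i.succ).1, hf2 0 i.succ (Fin.zero_le _)⟩, ?_⟩⟩
  intro i j hij
  exact hf2 i.succ j.succ (Fin.succ_le_succ_iff.mpr hij)

lemma chains_succ_sum (q : ℂ) (d k : ℕ) :
    ∑ f ∈ chainsIcc (d + 1) 1 k, (∏ i, qint q (f i))⁻¹
      = ∑ j ∈ Finset.Icc 1 k, (qint q j)⁻¹ * ∑ g ∈ chainsIcc d 1 j, (∏ i, qint q (g i))⁻¹ := by
  rw [Finset.sum_congr rfl (fun j _ => Finset.mul_sum _ _ _), Finset.sum_sigma']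
  refine Finset.sum_bij' (fun f _ => (⟨f 0, Fin.tail f⟩ : (_ : ℕ) × (Fin d → ℕ)))
    (fun x _ => Fin.cons x.1 x.2) ?_ ?_ ?_ ?_ ?_
  · intro f hf
    rw [Finset.mem_sigma]
    exact ⟨(mem_chains_tail hf).1, (mem_chains_tail hf).2⟩
  · rintro ⟨a, g⟩ hx
    rw [Finset.mem_sigma] at hx
    exact mem_chains_cons hx.1 hx.2
  · intro f hf
    exact Fin.cons_self_tail f
  · rintro ⟨a, g⟩ hx
    simp [Fin.cons_zero, Fin.tail_cons]
  · intro f hf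
    have : (fun i => qint q (f i)) = Fin.cons (qint q (f 0)) (fun i => qint q (Fin.tail f i)) := by
      funext i
      rcases Fin.eq_zero_or_eq_succ i with rfl | ⟨i', rfl⟩ <;> simp [Fin.tail]
    rw [this, Fin.prod_cons, mul_inv]

lemma brad_aux (q : ℂ) (hm : ∀ m : ℕ, 1 ≤ m → qint q m ≠ 0) (n : ℕ) : ∀ d : ℕ,
    ∑ k ∈ Finset.Icc 1 (n + 1), (-1 : ℂ) ^ (k + 1) * q ^ k.choose 2 * qbinom q (n + 1) k *
        ∑ f ∈ chainsIcc d 1 k, (∏ i, qint q (f i))⁻¹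
      = ((qint q (n + 1)) ^ d)⁻¹ := by
  intro d
  induction d with
  | zero =>
    simp only [chains_zero, mul_one, pow_zero, inv_one]
    have h1 := tail_sum q hm n 1 (le_refl 1) (by omega)
    simpa [qbinom_zero q hm] using h1
  | succ d ih =>
    have step1 : ∀ k ∈ Finset.Icc 1 (n + 1),
        (-1 : ℂ) ^ (k + 1) * q ^ k.choose 2 * qbinom q (n + 1) k *
          ∑ f ∈ chainsIcc (d + 1) 1 k, (∏ i, qint q (f i))⁻¹
        = ∑ j ∈ Finset.Icc 1 k, (-1 : ℂ) ^ (k + 1) * q ^ k.choose 2 * qbinom q (n + 1) k *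
            ((qint q j)⁻¹ * ∑ g ∈ chainsIcc d 1 j, (∏ i, qint q (g i))⁻¹) := by
      intro k _
      rw [chains_succ_sum, Finset.mul_sum]
    rw [Finset.sum_congr rfl step1]
    rw [Finset.sum_comm' (s := Finset.Icc 1 (n + 1)) (t := fun k => Finset.Icc 1 k)
      (t' := Finset.Icc 1 (n + 1)) (s' := fun j => Finset.Icc j (n + 1))
      (by intro k j; simp only [Finset.mem_Icc]; omega)]
    have step2 : ∀ j ∈ Finset.Icc 1 (n + 1),
        ∑ k ∈ Finset.Icc j (n + 1), (-1 : ℂ) ^ (k + 1) * q ^ k.choose 2 * qbinom q (n + 1) k *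
            ((qint q j)⁻¹ * ∑ g ∈ chainsIcc d 1 j, (∏ i, qint q (g i))⁻¹)
        = (qint q (n + 1))⁻¹ * ((-1 : ℂ) ^ (j + 1) * q ^ j.choose 2 * qbinom q (n + 1) j *
            ∑ g ∈ chainsIcc d 1 j, (∏ i, qint q (g i))⁻¹) := by
      intro j hj
      rw [Finset.mem_Icc] at hj
      obtain ⟨m, rfl⟩ : ∃ m, j = m + 1 := ⟨j - 1, by omega⟩
      rw [← Finset.sum_mul, tail_sum q hm n (m + 1) (by omega) hj.2, Nat.add_sub_cancel]
      have habs := qbinom_absorb q hm n m (by omega)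
      have h1 := hm (m + 1) (by omega)
      have h2 := hm (n + 1) (by omega)
      have hb : (qint q (m + 1))⁻¹ * qbinom q n m
          = (qint q (n + 1))⁻¹ * qbinom q (n + 1) (m + 1) := by
        field_simp
        linear_combination -habs
      linear_combination ((-1 : ℂ) ^ (m + 1 + 1) * q ^ (m + 1).choose 2 *
        ∑ g ∈ chainsIcc d 1 (m + 1), (∏ i, qint q (g i))⁻¹) * hb
    rw [Finset.sum_congr rfl step2, ← Finset.mul_sum, ih, pow_succ, mul_inv, mul_comm]

/-- `idx f j` is the paper's `n_j` (1-indexed entry of the chain `f`). -/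
def idx {w : ℕ} (f : Fin w → ℕ) (j : ℕ) : ℕ :=
  if h : j - 1 < w then f ⟨j - 1, h⟩ else 0

theorem bradley_identity (q : ℂ) (hm : ∀ m : ℕ, 1 ≤ m → qint q m ≠ 0)
    (n d : ℕ) (hn : 1 ≤ n) (hd : 1 ≤ d) :
    ∑ k ∈ Finset.Icc 1 n, (-1 : ℂ) ^ (k + 1) * q ^ k.choose 2 * qbinom q n k *
        ∑ f ∈ chainsIcc d 1 k, (∏ i, qint q (f i))⁻¹
      = ((qint q n) ^ d)⁻¹ := by
  obtain ⟨n', rfl⟩ : ∃ m, n = m + 1 := ⟨n - 1, by omega⟩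
  exact brad_aux q hm n' d
end

section
/- Let d ≥ 1, s = (s_1,...,s_d) a tuple of positive integers with weight w = s_1+...+s_d and partial sums l(i) = s_1+...+s_i (l(0)=0). For commuting variables t_1,...,t_d, x, y and every positive integer n: ∑_{k=1}^n C(n,k) x^k y^{n-k} · l_k^⋆(s,t) = ∑_{n ≥ n_1 ≥ ... ≥ n_w ≥ 1} (x+y)^{n-n_1} y^{n_1 + n_{l(1)+1} + ... + n_{l(d-1)+1} - n_{l(1)} - ... - n_{l(d)}} (∏_{r=1}^{d-1} (t_r x + y)^{n_{l(r)} - n_{l(r)+1}}) ((t_d x + y)^{n_{l(d)}} - y^{n_{l(d)}}) / (n_1 ··· n_w), where l_k^⋆(s,t) = ∑_{k ≥ m_1 ≥ ... ≥ m_d ≥ 1} t_1^{m_1-m_2} ··· t_{d-1}^{m_{d-1}-m_d} t_d^{m_d} / (m_1^{s_1} ··· m_d^{s_d}). -/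
set_option linter.unusedSectionVars false



/-- `lsum s i = l(i) = s_1 + ⋯ + s_i` (with `s j` playing the role of `s_{j+1}`). -/
def lsum (s : ℕ → ℕ) (i : ℕ) : ℕ := ∑ j ∈ Finset.range i, s j


def chainAt (N : ℕ) {w : ℕ} (f : Fin w → ℕ) (j : ℕ) : ℕ :=
  if j = 0 then N else idx f j

open Finset

section FMPAux

variable {A : Type*} [CommRing A] [Algebra ℚ A]

lemma mem_chainsIcc {d lo hi : ℕ} {f : Fin d → ℕ} :
    f ∈ chainsIcc d lo hi ↔ (∀ i, f i ∈ Finset.Icc lo hi) ∧ ∀ i j : Fin d, i ≤ j → f j ≤ f i := by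
  simp [chainsIcc, Fintype.mem_piFinset]

lemma sum_chainsIcc_zero {M : Type*} [AddCommMonoid M] (lo hi : ℕ)
    (F : (Fin 0 → ℕ) → M) :
    ∑ f ∈ chainsIcc 0 lo hi, F f = F finZeroElim := by
  have h : chainsIcc 0 lo hi = {finZeroElim} := by
    rw [Finset.eq_singleton_iff_unique_mem]
    constructor
    · rw [mem_chainsIcc]; exact ⟨fun i => i.elim0, fun i => i.elim0⟩
    · intro g _; funext i; exact i.elim0
  rw [h, Finset.sum_singleton]

lemma sum_chainsIcc_succ {M : Type*} [AddCommMonoid M] {w : ℕ} (lo hi : ℕ)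
    (F : (Fin (w+1) → ℕ) → M) :
    ∑ f ∈ chainsIcc (w+1) lo hi, F f
      = ∑ a ∈ Finset.Icc lo hi, ∑ g ∈ chainsIcc w lo a, F (Fin.cons a g) := by
  rw [← Finset.sum_sigma (Finset.Icc lo hi) (fun a => chainsIcc w lo a)
      (fun p => F (Fin.cons p.1 p.2))]
  apply Finset.sum_nbij' (fun f => (⟨f 0, Fin.tail f⟩ : Σ _ : ℕ, (Fin w → ℕ)))
      (fun p => Fin.cons p.1 p.2)
  · intro f hf
    rw [mem_chainsIcc] at hf
    rw [Finset.mem_sigma]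
    refine ⟨hf.1 0, ?_⟩
    rw [mem_chainsIcc]
    constructor
    · intro i
      have h1 := hf.1 i.succ
      have h2 := hf.2 0 i.succ (Fin.zero_le _)
      simp only [Finset.mem_Icc] at h1 ⊢
      exact ⟨h1.1, h2⟩
    · intro i j hij
      exact hf.2 i.succ j.succ (Fin.succ_le_succ_iff.mpr hij)
  · rintro ⟨a, g⟩ hp
    rw [Finset.mem_sigma] at hp
    obtain ⟨ha, hg⟩ := hp
    rw [mem_chainsIcc] at hg ⊢
    rw [Finset.mem_Icc] at ha
    constructor
    · intro i
      refine Fin.cases ?_ ?_ i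
      · simpa using Finset.mem_Icc.mpr ha
      · intro i'
        have := hg.1 i'
        simp only [Finset.mem_Icc, Fin.cons_succ] at this ⊢
        exact ⟨this.1, this.2.trans ha.2⟩
    · intro i j hij
      cases j using Fin.cases with
      | zero =>
        rw [Fin.le_zero_iff.mp hij]
      | succ j' =>
        cases i using Fin.cases with
        | zero =>
          simp only [Fin.cons_succ, Fin.cons_zero]
          exact (Finset.mem_Icc.mp (hg.1 j')).2
        | succ i' =>
          simp only [Fin.cons_succ]
          exact hg.2 i' j' (Fin.succ_le_succ_iff.mp hij)
  · intro f _; exact Fin.cons_self_tail f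
  · rintro ⟨a, g⟩ _; simp [Fin.tail_cons]
  · intro f _; rw [Fin.cons_self_tail]

lemma chainAt_cons {w : ℕ} (N a : ℕ) (g : Fin w → ℕ) (j : ℕ) :
    chainAt N (Fin.cons a g) (j + 1) = chainAt a g j := by
  match j with
  | 0 => simp [chainAt, idx]
  | j+1 =>
    have h1 : chainAt N (Fin.cons a g) (j+1+1) = idx (Fin.cons a g) (j+2) := by
      simp [chainAt]
    have h2 : chainAt a g (j+1) = idx g (j+1) := by simp [chainAt]
    rw [h1, h2]
    unfold idx
    simp only [Nat.add_sub_cancel, show j + 2 - 1 = j + 1 from rfl]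
    by_cases h : j < w
    · rw [dif_pos (show j + 1 < w + 1 by omega), dif_pos h]
      exact Fin.cons_succ (α := fun _ : Fin (w+1) => ℕ) a g ⟨j, h⟩
    · rw [dif_neg (by omega), dif_neg h]

lemma idx_zero_of_gt {w : ℕ} (f : Fin w → ℕ) {j : ℕ} (h : w + 1 ≤ j) : idx f j = 0 :=
  dif_neg (by omega)

lemma chainAt_pos {w n : ℕ} (f : Fin w → ℕ) (j : ℕ) : chainAt n f (j+1) = idx f (j+1) :=
  if_neg (Nat.succ_ne_zero j)

lemma chainAt_anti {w n : ℕ} {f : Fin w → ℕ} (hf : f ∈ chainsIcc w 1 n) :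
    ∀ i j : ℕ, i ≤ j → chainAt n f j ≤ chainAt n f i := by
  obtain ⟨h1, h2⟩ := mem_chainsIcc.mp hf
  have hle : ∀ j, chainAt n f j ≤ n := by
    intro j
    unfold chainAt idx
    split
    · exact le_refl n
    · split
      · exact (Finset.mem_Icc.mp (h1 _)).2
      · exact Nat.zero_le n
  intro i j hij
  match i with
  | 0 => exact hle j
  | i+1 =>
    match j with
    | j+1 =>
      unfold chainAt idx
      rw [if_neg (Nat.succ_ne_zero _), if_neg (Nat.succ_ne_zero _)]
      simp only [Nat.add_sub_cancel]
      split
      · rename_i hjw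
        rw [dif_pos (show i < w by omega)]
        exact h2 ⟨i, by omega⟩ ⟨j, hjw⟩ (by exact Fin.mk_le_mk.mpr (by omega))
      · exact Nat.zero_le _

lemma sum_sub_telescope (g : ℕ → ℕ) (hg : ∀ i j : ℕ, i ≤ j → g j ≤ g i) (w : ℕ) :
    ∑ j ∈ range w, (g j - g (j+1)) = g 0 - g w := by
  induction w with
  | zero => simp
  | succ w IH =>
    rw [Finset.sum_range_succ, IH]
    have h1 := hg 0 w (by omega)
    have h2 := hg w (w+1) (by omega)
    omega

lemma sum_Icc_shift {M : Type*} [AddCommMonoid M] (f : ℕ → M) (a b : ℕ) :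
    ∑ k ∈ Icc (a+1) (b+1), f k = ∑ k ∈ Icc a b, f (k+1) := by
  have h : Icc (a+1) (b+1) = (Icc a b).map (addLeftEmbedding 1) := by
    rw [Finset.map_add_left_Icc, add_comm 1 a, add_comm 1 b]
  rw [h, Finset.sum_map]
  refine Finset.sum_congr rfl fun k _ => ?_
  simp [addLeftEmbedding, add_comm]

lemma sum_range_shift {M : Type*} [AddCommMonoid M] (f : ℕ → M) (N : ℕ) :
    ∑ i ∈ range N, f (i+1) = ∑ a ∈ Icc 1 N, f a := by
  induction N with
  | zero => simp
  | succ N IH => rw [Finset.sum_range_succ, Finset.sum_Icc_succ_top (by omega), IH]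

def Ff (tp x y : A) (m N : ℕ) : A :=
  ∑ k ∈ Icc m N, (N.choose k : A) * (tp^(k-m) * x^k * y^(N-k))

def Gf (tp x y : A) (m N : ℕ) : A :=
  ∑ a ∈ Icc m N, ((a-1).choose (m-1) : A) * (x^m * y^(a-m) * (tp*x+y)^(N-a))

lemma Ff_zero (tp x y : A) (N : ℕ) : Ff tp x y 0 N = (tp*x+y)^N := by
  rw [add_pow, Ff, show Icc 0 N = range (N+1) by rw [← Nat.Ico_zero_eq_range, Finset.Ico_add_one_right_eq_Icc]]
  refine Finset.sum_congr rfl fun k _ => ?_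
  rw [mul_pow, Nat.sub_zero]; ring

lemma Ff_rec (tp x y : A) (m N : ℕ) :
    Ff tp x y (m+1) (N+1) = x * Ff tp x y m N + y * Ff tp x y (m+1) N := by
  have e1 : Ff tp x y (m+1) (N+1)
      = ∑ k ∈ Icc m N, ((N.choose k : A) + (N.choose (k+1) : A)) * (tp^(k-m) * x^(k+1) * y^(N-k)) := by
    rw [Ff, sum_Icc_shift]
    refine Finset.sum_congr rfl fun k _ => ?_
    rw [Nat.choose_succ_succ, show k+1-(m+1) = k-m by omega, show N+1-(k+1) = N-k by omega]
    push_cast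
    ring
  rw [e1]
  simp only [add_mul, Finset.sum_add_distrib]
  congr 1
  · rw [Ff, Finset.mul_sum]
    refine Finset.sum_congr rfl fun k _ => ?_
    ring
  · rcases lt_or_ge N m with hmN | hmN
    · rw [Ff, Finset.Icc_eq_empty (by omega), Finset.Icc_eq_empty (by omega),
        Finset.sum_empty, Finset.sum_empty, mul_zero]
    have e2 : ∑ k ∈ Icc m N, (N.choose (k+1) : A) * (tp^(k-m) * x^(k+1) * y^(N-k))
        = ∑ k ∈ Icc (m+1) (N+1), (N.choose k : A) * (tp^(k-(m+1)) * x^k * y^(N+1-k)) := by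
      rw [sum_Icc_shift]
      refine Finset.sum_congr rfl fun k hk => ?_
      rw [show k+1-(m+1) = k-m by omega, show N+1-(k+1) = N-k by omega]
    rw [e2, Finset.sum_Icc_succ_top (by omega), Nat.choose_eq_zero_of_lt (by omega)]
    push_cast
    rw [zero_mul, add_zero, Ff, Finset.mul_sum]
    refine Finset.sum_congr rfl fun k hk => ?_
    rw [Finset.mem_Icc] at hk
    rw [show N+1-k = (N-k)+1 by omega, pow_succ]
    ring

lemma Gf_one (tp x y : A) (N : ℕ) :
    Gf tp x y 1 (N+1) = x * (tp*x+y)^N + y * Gf tp x y 1 N := by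
  have e1 : Gf tp x y 1 (N+1) = ∑ a ∈ Icc 0 N, (x * y^a * (tp*x+y)^(N-a)) := by
    rw [Gf, show Icc 1 (N+1) = Icc (0+1) (N+1) by norm_num, sum_Icc_shift]
    refine Finset.sum_congr rfl fun a _ => ?_
    simp [Nat.succ_sub_succ]
  rw [e1, show Icc 0 N = range (N+1) by rw [← Nat.Ico_zero_eq_range, Finset.Ico_add_one_right_eq_Icc],
    Finset.sum_range_succ']
  have hA : x * y^0 * (tp*x+y)^(N-0) = x*(tp*x+y)^N := by simp
  have hB : ∑ i ∈ range N, x * y^(i+1) * (tp*x+y)^(N-(i+1)) = y * Gf tp x y 1 N := by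
    rw [sum_range_shift (fun a => x * y^a * (tp*x+y)^(N-a)), Gf, Finset.mul_sum]
    refine Finset.sum_congr rfl fun a ha => ?_
    rw [Finset.mem_Icc] at ha
    rw [pow_one, Nat.sub_self (1-1), show a = (a-1)+1 by omega]
    simp only [Nat.add_sub_cancel, Nat.choose_zero_right, Nat.cast_one, one_mul, pow_succ]
    ring
  rw [hA, hB, add_comm]

lemma Gf_rec (tp x y : A) (m N : ℕ) :
    Gf tp x y (m+2) (N+1) = x * Gf tp x y (m+1) N + y * Gf tp x y (m+2) N := by
  have e1 : Gf tp x y (m+2) (N+1)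
      = ∑ a ∈ Icc (m+1) N, (((a-1).choose m : A) + ((a-1).choose (m+1) : A))
          * (x^(m+2) * y^(a-(m+1)) * (tp*x+y)^(N-a)) := by
    rw [Gf, sum_Icc_shift]
    refine Finset.sum_congr rfl fun a ha => ?_
    rw [Finset.mem_Icc] at ha
    rw [show a+1-1 = a from rfl, show m+2-1 = m+1 from rfl,
      show a = (a-1)+1 by omega, Nat.choose_succ_succ,
      show a-1+1+1-(m+2) = a-1+1-(m+1) by omega, show N+1-(a-1+1+1) = N-(a-1+1) by omega]
    push_cast
    ring
  rw [e1]
  simp only [add_mul, Finset.sum_add_distrib]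
  congr 1
  · rw [Gf, Finset.mul_sum]
    refine Finset.sum_congr rfl fun a _ => ?_
    rw [show m+1-1 = m from rfl]
    ring
  · have e2 : ∑ a ∈ Icc (m+1) N, ((a-1).choose (m+1) : A) * (x^(m+2) * y^(a-(m+1)) * (tp*x+y)^(N-a))
        = ∑ a ∈ Icc (m+2) N, ((a-1).choose (m+1) : A) * (x^(m+2) * y^(a-(m+1)) * (tp*x+y)^(N-a)) := by
      refine (Finset.sum_subset (Finset.Icc_subset_Icc_left (by omega)) ?_).symm
      intro a ha ha2
      rw [Finset.mem_Icc] at ha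
      rw [Finset.mem_Icc] at ha2
      have : a = m+1 := by omega
      subst this
      rw [show m+1-1 = m from rfl, Nat.choose_eq_zero_of_lt (by omega)]
      push_cast
      ring
    rw [e2, Gf, Finset.mul_sum]
    refine Finset.sum_congr rfl fun a ha => ?_
    rw [Finset.mem_Icc] at ha
    rw [show m+2-1 = m+1 from rfl, show a-(m+1) = (a-(m+2))+1 by omega, pow_succ]
    ring

lemma Aprime (tp x y : A) : ∀ N m : ℕ, Ff tp x y (m+1) N = Gf tp x y (m+1) N := by
  intro N
  induction N with
  | zero =>
    intro m
    rw [Ff, Gf, Finset.Icc_eq_empty (by omega), Finset.sum_empty, Finset.sum_empty]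
  | succ N IH =>
    intro m
    match m with
    | 0 => rw [Ff_rec, Gf_one, Ff_zero, IH 0]
    | m+1 => rw [Ff_rec, Gf_rec, IH m, IH (m+1)]

def specL (s : ℕ → ℕ) (t : ℕ → A) : ℕ → List (ℕ × A)
  | 0 => []
  | d+1 => (s 0, t 0) :: specL (fun i => s (i+1)) (fun i => t (i+1)) d

def Wfun : A → List (ℕ × A) → ℕ → A
  | tp, [], M => tp ^ M
  | tp, p :: rest, M =>
      ∑ m ∈ Finset.Icc 1 M, ((m : ℚ) ^ p.1)⁻¹ • (tp ^ (M - m) * Wfun p.2 rest m)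

def Rfun (y z : A) : List A → ℕ → A
  | [], N => z ^ N - y ^ N
  | c :: cs, N => ∑ a ∈ Finset.Icc 1 N, (a : ℚ)⁻¹ • (c ^ (N - a) * Rfun y z cs a)

def Gfun (x y : A) (e : ℕ) (tp : A) (sp : List (ℕ × A)) (N : ℕ) : A :=
  ∑ k ∈ Finset.Icc 1 N,
    ((k : ℚ) ^ e)⁻¹ • ((N.choose k : ℚ) • (x ^ k * y ^ (N - k) * Wfun tp sp k))

def clList (x y : A) : ℕ → A → List (ℕ × A) → List A
  | 0, _, [] => []
  | 0, tp, p :: rest => (tp * x + y) :: clList x y (p.1 - 1) p.2 rest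
  | e+1, tp, sp => y :: clList x y e tp sp
  termination_by e _ sp => (sp.length, e)
def zfin (x y : A) : A → List (ℕ × A) → A
  | tp, [] => tp * x + y
  | _, p :: rest => zfin x y p.2 rest

lemma chainAt_zero {w : ℕ} (N : ℕ) (f : Fin w → ℕ) : chainAt N f 0 = N := rfl

lemma idx_eq_chainAt {w : ℕ} (N : ℕ) (f : Fin w → ℕ) (j : ℕ) :
    idx f (j+1) = chainAt N f (j+1) := by simp [chainAt]

lemma idx_cons_one {w : ℕ} (a : ℕ) (g : Fin w → ℕ) : idx (Fin.cons a g) 1 = a := by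
  simp [idx]

lemma Wconv (d : ℕ) (s : ℕ → ℕ) (t : ℕ → A) (tp : A) (M : ℕ) :
    ∑ m ∈ chainsIcc d 1 M,
      (∏ j ∈ Finset.range d, (idx m (j+1) : ℚ) ^ s j)⁻¹ •
        ∏ j ∈ Finset.range (d+1),
          (if j = 0 then tp else t (j-1)) ^ (chainAt M m j - chainAt M m (j+1))
    = Wfun tp (specL s t d) M := by
  induction d generalizing s t tp M with
  | zero =>
    rw [sum_chainsIcc_zero]
    simp [chainAt, idx, Wfun, specL]
  | succ d IH =>
    rw [sum_chainsIcc_succ, specL]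
    show _ = ∑ a ∈ Finset.Icc 1 M, ((a:ℚ) ^ s 0)⁻¹ •
      (tp ^ (M - a) * Wfun (t 0) (specL (fun i => s (i+1)) (fun i => t (i+1)) d) a)
    refine Finset.sum_congr rfl fun a _ => ?_
    rw [← IH]
    rw [Finset.mul_sum, Finset.smul_sum]
    refine Finset.sum_congr rfl fun g _ => ?_
    have hP : ∏ j ∈ Finset.range (d+1), (idx (Fin.cons a g) (j+1) : ℚ) ^ s j
        = (a:ℚ) ^ s 0 * ∏ j ∈ Finset.range d, (idx g (j+1) : ℚ) ^ s (j+1) := by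
      rw [Finset.prod_range_succ']
      rw [idx_cons_one, mul_comm]
      congr 1
      refine Finset.prod_congr rfl fun j _ => ?_
      rw [idx_eq_chainAt M (Fin.cons a g) (j+1), chainAt_cons, ← idx_eq_chainAt a g j]
    have hT : ∏ j ∈ Finset.range (d+1+1),
          (if j = 0 then tp else t (j-1)) ^ (chainAt M (Fin.cons a g) j - chainAt M (Fin.cons a g) (j+1))
        = tp ^ (M - a) * ∏ j ∈ Finset.range (d+1),
            (if j = 0 then t 0 else (fun i => t (i+1)) (j-1)) ^ (chainAt a g j - chainAt a g (j+1)) := by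
      rw [Finset.prod_range_succ']
      have h0 : chainAt M (Fin.cons a g) 0 - chainAt M (Fin.cons a g) 1 = M - a := by
        rw [chainAt_zero, chainAt_cons, chainAt_zero]
      rw [h0, mul_comm]
      simp only [if_pos rfl]
      congr 1
      refine Finset.prod_congr rfl fun j _ => ?_
      rw [chainAt_cons, chainAt_cons]
      congr 1
      rcases j with _ | j <;> simp
    rw [hP, hT, mul_inv, mul_smul_comm, smul_smul]

lemma Rconv (y z : A) (cs : List A) : ∀ N : ℕ,
    ∑ f ∈ chainsIcc cs.length 1 N,
      (∏ j ∈ Finset.range cs.length, (idx f (j+1) : ℚ))⁻¹ •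
        ((∏ j ∈ Finset.range cs.length,
            (cs.getD j 1) ^ (chainAt N f j - chainAt N f (j+1))) *
          (z ^ chainAt N f cs.length - y ^ chainAt N f cs.length))
    = Rfun y z cs N := by
  induction cs with
  | nil =>
    intro N
    rw [show ([] : List A).length = 0 from rfl, sum_chainsIcc_zero]
    simp [Rfun, chainAt]
  | cons c cs IH =>
    intro N
    rw [show (c :: cs).length = cs.length + 1 from rfl, sum_chainsIcc_succ]
    show _ = ∑ a ∈ Finset.Icc 1 N, (a : ℚ)⁻¹ • (c ^ (N - a) * Rfun y z cs a)
    refine Finset.sum_congr rfl fun a _ => ?_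
    rw [← IH a, Finset.mul_sum, Finset.smul_sum]
    refine Finset.sum_congr rfl fun g _ => ?_
    have hP : ∏ j ∈ Finset.range (cs.length+1), (idx (Fin.cons a g) (j+1) : ℚ)
        = (a:ℚ) * ∏ j ∈ Finset.range cs.length, (idx g (j+1) : ℚ) := by
      rw [Finset.prod_range_succ', idx_cons_one, mul_comm]
      congr 1
      refine Finset.prod_congr rfl fun j _ => ?_
      rw [idx_eq_chainAt N (Fin.cons a g) (j+1), chainAt_cons, ← idx_eq_chainAt a g j]
    have hT : ∏ j ∈ Finset.range (cs.length+1),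
          ((c :: cs).getD j 1) ^ (chainAt N (Fin.cons a g) j - chainAt N (Fin.cons a g) (j+1))
        = c ^ (N - a) * ∏ j ∈ Finset.range cs.length,
            (cs.getD j 1) ^ (chainAt a g j - chainAt a g (j+1)) := by
      rw [Finset.prod_range_succ']
      have h0 : chainAt N (Fin.cons a g) 0 - chainAt N (Fin.cons a g) 1 = N - a := by
        rw [chainAt_zero, chainAt_cons, chainAt_zero]
      rw [h0, mul_comm]
      congr 1
      refine Finset.prod_congr rfl fun j _ => ?_
      rw [chainAt_cons, chainAt_cons]
      rfl
    have hZ : chainAt N (Fin.cons a g) (cs.length + 1) = chainAt a g cs.length :=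
      chainAt_cons _ _ _ _
    rw [hP, hT, hZ, mul_inv, mul_smul_comm, smul_smul, mul_assoc]

lemma natCast_smul (c : ℕ) (v : A) : ((c : ℚ)) • v = (c : A) * v := by
  rw [show ((c:ℕ):ℚ) • v = c • v from Nat.cast_smul_eq_nsmul ℚ c v, nsmul_eq_mul]

lemma inv_mul_choose (a k : ℕ) (hk : 1 ≤ k) (ha : k ≤ a) :
    (a:ℚ)⁻¹ * a.choose k = (k:ℚ)⁻¹ * (a-1).choose (k-1) := by
  have h := Nat.add_one_mul_choose_eq (a-1) (k-1)
  rw [Nat.sub_add_cancel (by omega), Nat.sub_add_cancel hk] at h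
  have ha0 : (a:ℚ) ≠ 0 := Nat.cast_ne_zero.mpr (by omega)
  have hk0 : (k:ℚ) ≠ 0 := Nat.cast_ne_zero.mpr (by omega)
  have h' : ((a:ℚ)) * ((a-1).choose (k-1)) = (a.choose k) * k := by exact_mod_cast h
  rw [inv_mul_eq_div, inv_mul_eq_div, div_eq_div_iff ha0 hk0]
  linarith [h']

lemma hsQ (N k : ℕ) (hk : 1 ≤ k) :
    ∑ a ∈ Icc k N, ((a:ℚ)⁻¹ * a.choose k) = (k:ℚ)⁻¹ * N.choose k := by
  rcases lt_or_ge N k with h | h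
  · rw [Finset.Icc_eq_empty (by omega), Finset.sum_empty, Nat.choose_eq_zero_of_lt h]
    simp
  · have e1 : ∑ a ∈ Icc k N, ((a:ℚ)⁻¹ * a.choose k)
        = (k:ℚ)⁻¹ * ∑ a ∈ Icc k N, (((a-1).choose (k-1) : ℕ) : ℚ) := by
      rw [Finset.mul_sum]
      refine Finset.sum_congr rfl fun a ha => ?_
      rw [Finset.mem_Icc] at ha
      exact inv_mul_choose a k hk ha.1
    rw [e1]
    congr 1
    rw [← Nat.cast_sum]
    norm_cast
    have e2 : ∑ a ∈ Icc k N, (a-1).choose (k-1) = ∑ b ∈ Icc (k-1) (N-1), b.choose (k-1) := by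
      rw [show Icc k N = Icc ((k-1)+1) ((N-1)+1) by congr 1 <;> omega, sum_Icc_shift]
      exact Finset.sum_congr rfl fun b _ => by rw [Nat.add_sub_cancel]
    rw [e2, Nat.sum_Icc_choose, Nat.sub_add_cancel (by omega), Nat.sub_add_cancel hk]

lemma KB (x y : A) (e : ℕ) (tp : A) (sp : List (ℕ × A)) (N : ℕ) :
    Gfun x y (e+1) tp sp N
      = ∑ a ∈ Icc 1 N, (a:ℚ)⁻¹ • (y^(N-a) * Gfun x y e tp sp a) := by
  rw [Gfun]
  have step1 : ∀ k ∈ Icc 1 N,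
      ((k:ℚ)^(e+1))⁻¹ • ((N.choose k : ℚ) • (x^k * y^(N-k) * Wfun tp sp k))
      = ∑ a ∈ Icc k N, (a:ℚ)⁻¹ •
          (y^(N-a) * (((k:ℚ)^e)⁻¹ • ((a.choose k:ℚ) • (x^k * y^(a-k) * Wfun tp sp k)))) := by
    intro k hk
    rw [Finset.mem_Icc] at hk
    have e1 : ∀ a ∈ Icc k N, (a:ℚ)⁻¹ •
          (y^(N-a) * (((k:ℚ)^e)⁻¹ • ((a.choose k:ℚ) • (x^k * y^(a-k) * Wfun tp sp k))))
        = ((a:ℚ)⁻¹ * (a.choose k) * ((k:ℚ)^e)⁻¹) • (x^k * y^(N-k) * Wfun tp sp k) := by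
      intro a ha
      rw [Finset.mem_Icc] at ha
      simp only [mul_smul_comm, smul_smul]
      congr 1
      · ring
      · rw [show N-k = (N-a)+(a-k) by omega, pow_add]
        ring
    rw [Finset.sum_congr rfl e1, ← Finset.sum_smul, smul_smul]
    congr 1
    rw [← Finset.sum_mul, hsQ N k hk.1, pow_succ, mul_inv]
    ring
  rw [Finset.sum_congr rfl step1]
  rw [Finset.sum_comm' (t' := Icc 1 N) (s' := fun a => Icc 1 a)
    (by intro k a; simp only [Finset.mem_Icc]; omega)]
  refine Finset.sum_congr rfl fun a _ => ?_
  rw [Gfun, Finset.mul_sum, Finset.smul_sum]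

lemma KA (x y : A) (tp : A) (e' : ℕ) (t' : A) (rest : List (ℕ × A)) (N : ℕ) (he : 1 ≤ e') :
    Gfun x y 0 tp ((e',t')::rest) N
    = ∑ a ∈ Icc 1 N, (a:ℚ)⁻¹ • ((tp*x+y)^(N-a) * Gfun x y (e'-1) t' rest a) := by
  have step1 : Gfun x y 0 tp ((e',t')::rest) N
      = ∑ k ∈ Icc 1 N, ∑ m ∈ Icc 1 k,
          ((m:ℚ)^e')⁻¹ • ((N.choose k : ℚ) •
            (tp^(k-m) * x^k * y^(N-k) * Wfun t' rest m)) := by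
    rw [Gfun]
    refine Finset.sum_congr rfl fun k hk => ?_
    rw [pow_zero, inv_one, one_smul]
    show (N.choose k : ℚ) • (x^k * y^(N-k) *
      ∑ m ∈ Icc 1 k, ((m:ℚ)^e')⁻¹ • (tp^(k-m) * Wfun t' rest m)) = _
    rw [Finset.mul_sum, Finset.smul_sum]
    refine Finset.sum_congr rfl fun m hm => ?_
    simp only [mul_smul_comm, smul_smul]
    rw [mul_comm ((N.choose k : ℚ)) (((m:ℚ)^e')⁻¹)]
    congr 1
    ring
  rw [step1, Finset.sum_comm' (t' := Icc 1 N) (s' := fun m => Icc m N)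
    (by intro k m; simp only [Finset.mem_Icc]; omega)]
  have step2 : ∀ m ∈ Icc 1 N,
      ∑ k ∈ Icc m N, ((m:ℚ)^e')⁻¹ • ((N.choose k : ℚ) •
          (tp^(k-m) * x^k * y^(N-k) * Wfun t' rest m))
      = ((m:ℚ)^e')⁻¹ • (Ff tp x y m N * Wfun t' rest m) := by
    intro m hm
    rw [Ff, Finset.sum_mul, Finset.smul_sum]
    refine Finset.sum_congr rfl fun k _ => ?_
    rw [natCast_smul]
    congr 1
    ring
  rw [Finset.sum_congr rfl step2]
  have step3 : ∀ m ∈ Icc 1 N,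
      ((m:ℚ)^e')⁻¹ • (Ff tp x y m N * Wfun t' rest m)
      = ∑ a ∈ Icc m N, ((m:ℚ)^e')⁻¹ • (((a-1).choose (m-1) : A) *
          (x^m * y^(a-m) * (tp*x+y)^(N-a)) * Wfun t' rest m) := by
    intro m hm
    rw [Finset.mem_Icc] at hm
    rw [show m = (m-1)+1 by omega, Aprime, Gf, Finset.sum_mul, Finset.smul_sum]
  rw [Finset.sum_congr rfl step3]
  rw [Finset.sum_comm' (t' := Icc 1 N) (s' := fun a => Icc 1 a)
    (by intro m a; simp only [Finset.mem_Icc]; omega)]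
  refine Finset.sum_congr rfl fun a ha => ?_
  rw [Finset.mem_Icc] at ha
  have step4 : ∀ m ∈ Icc 1 a,
      ((m:ℚ)^e')⁻¹ • (((a-1).choose (m-1) : A) *
          (x^m * y^(a-m) * (tp*x+y)^(N-a)) * Wfun t' rest m)
      = (a:ℚ)⁻¹ • ((tp*x+y)^(N-a) *
          (((m:ℚ)^(e'-1))⁻¹ • ((a.choose m : ℚ) • (x^m * y^(a-m) * Wfun t' rest m)))) := by
    intro m hm
    rw [Finset.mem_Icc] at hm
    rw [← natCast_smul ((a-1).choose (m-1)) (x^m * y^(a-m) * (tp*x+y)^(N-a))]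
    simp only [mul_smul_comm, smul_smul, smul_mul_assoc]
    congr 1
    · have key : (m:ℚ)⁻¹ * ((a-1).choose (m-1)) = (a:ℚ)⁻¹ * (a.choose m) :=
        (inv_mul_choose a m hm.1 hm.2).symm
      rw [show e' = (e'-1)+1 by omega, pow_succ, mul_inv]
      calc ((m:ℚ)^(e'-1))⁻¹ * (m:ℚ)⁻¹ * ((a-1).choose (m-1))
          = ((m:ℚ)^(e'-1))⁻¹ * ((m:ℚ)⁻¹ * ((a-1).choose (m-1))) := by ring
        _ = ((m:ℚ)^(e'-1))⁻¹ * ((a:ℚ)⁻¹ * (a.choose m)) := by rw [key]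
        _ = (a:ℚ)⁻¹ * (((m:ℚ)^(e'-1))⁻¹ * (a.choose m)) := by ring
    · ring
  rw [Finset.sum_congr rfl step4, ← Finset.smul_sum, ← Finset.mul_sum, Gfun]

lemma K0 (x y tp : A) (N : ℕ) : Gfun x y 0 tp [] N = (tp*x+y)^N - y^N := by
  have hins : Icc 0 N = insert 0 (Icc 1 N) := by
    ext a; simp only [Finset.mem_Icc, Finset.mem_insert]; omega
  have e1 : Gfun x y 0 tp [] N
      = ∑ k ∈ Icc 1 N, (N.choose k : A) * (tp^(k-0) * x^k * y^(N-k)) := by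
    rw [Gfun]
    refine Finset.sum_congr rfl fun k _ => ?_
    rw [pow_zero, inv_one, one_smul, natCast_smul]
    show (N.choose k : A) * (x^k * y^(N-k) * tp^k) = _
    rw [Nat.sub_zero]; ring
  have e2 : Ff tp x y 0 N = y^N + ∑ k ∈ Icc 1 N, (N.choose k:A) * (tp^(k-0)*x^k*y^(N-k)) := by
    rw [Ff, hins, Finset.sum_insert (by simp)]
    simp
  rw [e1, ← Ff_zero tp x y N, e2]; ring

lemma MAIN (x y : A) : ∀ (sp : List (ℕ × A)), (∀ p ∈ sp, 1 ≤ p.1) → ∀ e tp N,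
    Gfun x y e tp sp N = Rfun y (zfin x y tp sp) (clList x y e tp sp) N := by
  intro sp
  induction sp with
  | nil =>
    intro _ e tp
    induction e with
    | zero =>
      intro N
      rw [K0]
      simp only [clList, zfin, Rfun]
    | succ e IH =>
      intro N
      rw [KB]
      simp only [clList, Rfun]
      exact Finset.sum_congr rfl fun a _ => by rw [IH]
  | cons p rest IHrest =>
    intro hsp e tp
    have hp : 1 ≤ p.1 := hsp p (List.mem_cons_self)
    have hrest : ∀ q ∈ rest, 1 ≤ q.1 := fun q hq => hsp q (List.mem_cons_of_mem p hq)
    induction e with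
    | zero =>
      intro N
      obtain ⟨e', t'⟩ := p
      rw [KA x y tp e' t' rest N hp]
      simp only [clList, zfin, Rfun]
      exact Finset.sum_congr rfl fun a _ => by rw [IHrest hrest (e'-1) t' a]
    | succ e IH =>
      intro N
      rw [KB]
      simp only [clList, Rfun]
      exact Finset.sum_congr rfl fun a _ => by rw [IH]

lemma lsum_zero (s : ℕ → ℕ) : lsum s 0 = 0 := by simp [lsum]
lemma lsum_succ_left (s : ℕ → ℕ) (r : ℕ) :
    lsum s (r+1) = s 0 + lsum (fun i => s (i+1)) r := by
  rw [lsum, Finset.sum_range_succ', add_comm]; rfl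
lemma lsum_succ (s : ℕ → ℕ) (r : ℕ) : lsum s (r+1) = lsum s r + s r :=
  Finset.sum_range_succ s r
lemma lsum_mono (s : ℕ → ℕ) {i j : ℕ} (h : i ≤ j) : lsum s i ≤ lsum s j := by
  unfold lsum
  exact Finset.sum_le_sum_of_subset (Finset.range_subset_range.mpr h)
lemma lsum_lt (s : ℕ → ℕ) {i j d : ℕ} (h : i < j) (hj : j ≤ d) (hs : ∀ i < d, 1 ≤ s i) :
    lsum s i < lsum s j := by
  have h1 : lsum s (i+1) ≤ lsum s j := lsum_mono s h
  have h2 : lsum s (i+1) = lsum s i + s i := lsum_succ s i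
  have h3 : 1 ≤ s i := hs i (by omega)
  omega

lemma clList_length (x y : A) : ∀ (d : ℕ) (s : ℕ → ℕ) (t : ℕ → A),
    (∀ i < d, 1 ≤ s i) → ∀ (e : ℕ) (tp : A),
    (clList x y e tp (specL s t d)).length = e + lsum s d := by
  intro d
  induction d with
  | zero =>
    intro s t hs e tp
    induction e with
    | zero => simp [clList, specL, lsum]
    | succ e IH => simp only [specL, clList, List.length_cons] at *; omega
  | succ d IHd =>
    intro s t hs e tp
    induction e with
    | zero =>
      simp only [specL, clList, List.length_cons]
      rw [IHd _ _ (fun i hi => hs (i+1) (by omega)) (s 0 - 1) (t 0), lsum_succ_left]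
      have := hs 0 (by omega)
      omega
    | succ e IH =>
      simp only [specL, clList, List.length_cons] at *
      omega

lemma clList_getD_boundary (x y : A) : ∀ (d : ℕ) (s : ℕ → ℕ) (t : ℕ → A),
    (∀ i < d, 1 ≤ s i) → ∀ (e : ℕ) (tp : A) (r : ℕ), r < d →
    (clList x y e tp (specL s t d)).getD (e + lsum s r) 1
      = (if r = 0 then tp else t (r-1)) * x + y := by
  intro d
  induction d with
  | zero => intro _ _ _ _ _ r hr; omega
  | succ d IHd =>
    intro s t hs e tp r hr
    induction e with
    | zero =>
      match r with
      | 0 => simp [specL, clList, lsum_zero]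
      | r'+1 =>
        have hs0 : 1 ≤ s 0 := hs 0 (by omega)
        simp only [specL, clList]
        rw [show 0 + lsum s (r'+1) = ((s 0 - 1) + lsum (fun i => s (i+1)) r') + 1 by
          rw [lsum_succ_left]; omega]
        rw [List.getD_cons_succ]
        rw [IHd _ _ (fun i hi => hs (i+1) (by omega)) (s 0 - 1) (t 0) r' (by omega)]
        rcases Nat.eq_zero_or_pos r' with h | h
        · simp [h]
        · rw [if_neg (by omega), if_neg (by omega)]
          show t (r'-1+1) * x + y = t (r'+1-1) * x + y
          rw [show r'-1+1 = r'+1-1 by omega]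
    | succ e IH =>
      simp only [specL, clList] at *
      rw [show e + 1 + lsum s r = (e + lsum s r) + 1 by omega, List.getD_cons_succ]
      exact IH

lemma clList_getD_y (x y : A) : ∀ (d : ℕ) (s : ℕ → ℕ) (t : ℕ → A),
    (∀ i < d, 1 ≤ s i) → ∀ (e : ℕ) (tp : A) (j : ℕ),
    j < e + lsum s d → (∀ r < d, j ≠ e + lsum s r) →
    (clList x y e tp (specL s t d)).getD j 1 = y := by
  intro d
  induction d with
  | zero =>
    intro s t hs e tp
    induction e with
    | zero => intro j hj _; rw [lsum_zero] at hj; omega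
    | succ e IH =>
      intro j hj hne
      simp only [specL, clList] at *
      match j with
      | 0 => rfl
      | j'+1 =>
        rw [List.getD_cons_succ]
        exact IH j' (by omega) (fun r hr => by omega)
  | succ d IHd =>
    intro s t hs e tp
    induction e with
    | zero =>
      intro j hj hne
      have hs0 : 1 ≤ s 0 := hs 0 (by omega)
      have hj0 : j ≠ 0 := by
        have := hne 0 (by omega)
        rw [lsum_zero] at this
        omega
      match j with
      | j'+1 =>
        simp only [specL, clList]
        rw [List.getD_cons_succ]
        refine IHd _ _ (fun i hi => hs (i+1) (by omega)) (s 0 - 1) (t 0) j' ?_ ?_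
        · rw [lsum_succ_left] at hj; omega
        · intro r hr hcon
          refine hne (r+1) (by omega) ?_
          rw [lsum_succ_left]
          omega
    | succ e IH =>
      intro j hj hne
      simp only [specL, clList] at *
      match j with
      | 0 => rfl
      | j'+1 =>
        rw [List.getD_cons_succ]
        refine IH j' (by omega) (fun r hr => ?_)
        have := hne r hr
        omega

lemma zfin_specL (x y : A) : ∀ (d : ℕ) (s : ℕ → ℕ) (t : ℕ → A) (tp : A),
    zfin x y tp (specL s t (d+1)) = t d * x + y := by
  intro d
  induction d with
  | zero => intro s t tp; simp [specL, zfin]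
  | succ d IHd =>
    intro s t tp
    have h1 : zfin x y tp (specL s t (d+1+1))
        = zfin x y (t 0) (specL (fun i => s (i+1)) (fun i => t (i+1)) (d+1)) := rfl
    rw [h1]
    exact IHd _ _ _

end FMPAux
section FMPFinal

variable {A : Type*} [CommRing A] [Algebra ℚ A]

lemma chain_idx_le {w n : ℕ} {f : Fin w → ℕ} (hf : f ∈ chainsIcc w 1 n) :
    ∀ j, 1 ≤ j → idx f j ≤ n := by
  intro j hj
  have h := chainAt_anti hf 0 j (by omega)
  unfold chainAt at h
  rw [if_neg (by omega), if_pos rfl] at h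
  exact h

lemma chain_idx_anti {w n : ℕ} {f : Fin w → ℕ} (hf : f ∈ chainsIcc w 1 n) :
    ∀ i j, 1 ≤ i → i ≤ j → idx f j ≤ idx f i := by
  intro i j hi hij
  have h := chainAt_anti hf i j hij
  unfold chainAt at h
  rw [if_neg (by omega), if_neg (by omega)] at h
  exact h

lemma specL_fst : ∀ (d : ℕ) (s : ℕ → ℕ) (t : ℕ → A), (∀ i < d, 1 ≤ s i) →
    ∀ p ∈ specL s t d, 1 ≤ p.1 := by
  intro d
  induction d with
  | zero => intro s t hs p hp; simp [specL] at hp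
  | succ d IH =>
    intro s t hs p hp
    rcases List.mem_cons.mp hp with rfl | hp'
    · exact hs 0 (by omega)
    · exact IH _ _ (fun i hi => hs (i+1) (by omega)) p hp'

lemma lsum_pos (d : ℕ) (hd : 1 ≤ d) (s : ℕ → ℕ) (hs : ∀ i < d, 1 ≤ s i) :
    1 ≤ lsum s d := by
  have := lsum_lt s (show 0 < d by omega) (le_refl d) hs
  rw [lsum_zero] at this
  omega

lemma LHS_eq (x y : A) (d : ℕ) (hd : 1 ≤ d) (s : ℕ → ℕ) (t : ℕ → A) (n : ℕ) :
    ∑ k ∈ Finset.Icc 1 n, (n.choose k : ℚ) •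
        (x ^ k * y ^ (n - k) *
          ∑ m ∈ chainsIcc d 1 k,
            (∏ j ∈ Finset.range d, (idx m (j + 1) : ℚ) ^ s j)⁻¹ •
              ((∏ j ∈ Finset.range (d - 1), t j ^ (idx m (j + 1) - idx m (j + 2))) *
                t (d - 1) ^ (idx m d)))
    = Gfun x y 0 1 (specL s t d) n := by
  rw [Gfun]
  refine Finset.sum_congr rfl fun k _ => ?_
  rw [pow_zero, inv_one, one_smul, ← Wconv d s t 1 k]
  congr 1
  congr 1
  refine Finset.sum_congr rfl fun m _ => ?_
  congr 1
  rw [Finset.prod_range_succ', if_pos rfl, one_pow, mul_one]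
  have h1 : ∀ j ∈ Finset.range d,
      (if j + 1 = 0 then (1:A) else t (j+1-1)) ^ (chainAt k m (j+1) - chainAt k m (j+1+1))
      = t j ^ (idx m (j+1) - idx m (j+2)) := by
    intro j _
    rw [if_neg (Nat.succ_ne_zero j), chainAt_pos, chainAt_pos]
    rfl
  rw [Finset.prod_congr rfl h1]
  have hsplit2 : ∏ j ∈ Finset.range d, t j ^ (idx m (j+1) - idx m (j+2))
      = (∏ j ∈ Finset.range (d-1), t j ^ (idx m (j+1) - idx m (j+2)))
        * t (d-1) ^ (idx m (d-1+1) - idx m (d-1+2)) := by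
    rw [← Finset.prod_range_succ (fun j => t j ^ (idx m (j+1) - idx m (j+2))) (d-1)]
    congr 2
    omega
  rw [hsplit2, idx_zero_of_gt m (show d+1 ≤ d-1+2 by omega), Nat.sub_zero,
    show d-1+1 = d by omega]

lemma RHS_prod (x y : A) (d : ℕ) (hd : 1 ≤ d) (s : ℕ → ℕ) (hs : ∀ i < d, 1 ≤ s i)
    (t : ℕ → A) (n : ℕ) (f : Fin (lsum s d) → ℕ) (hf : f ∈ chainsIcc (lsum s d) 1 n) :
    ∏ j ∈ Finset.range (lsum s d),
        ((clList x y 0 1 (specL s t d)).getD j 1) ^ (chainAt n f j - chainAt n f (j+1))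
    = (x + y) ^ (n - idx f 1) *
        y ^ ((idx f 1 + ∑ r ∈ Finset.range (d - 1), idx f (lsum s (r + 1) + 1)) -
              ∑ r ∈ Finset.range d, idx f (lsum s (r + 1))) *
        ∏ r ∈ Finset.range (d - 1),
          (t r * x + y) ^ (idx f (lsum s (r + 1)) - idx f (lsum s (r + 1) + 1)) := by
  have hw : 1 ≤ lsum s d := lsum_pos d hd s hs
  have hanti := chainAt_anti hf
  have hidx := chain_idx_anti hf
  have hlen : ∀ i j, i < j → j ≤ d → lsum s i < lsum s j := fun i j h hj => lsum_lt s h hj hs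
  set B : Finset ℕ := (Finset.range (d-1)).image (fun r => lsum s (r+1)) with hB
  have h0B : (0:ℕ) ∉ B := by
    intro h
    obtain ⟨r, hr, he⟩ := Finset.mem_image.mp h
    have := hlen 0 (r+1) (by omega) (by rw [Finset.mem_range] at hr; omega)
    rw [lsum_zero] at this
    omega
  have hsub : insert 0 B ⊆ Finset.range (lsum s d) := by
    intro b hb
    rcases Finset.mem_insert.mp hb with rfl | hb'
    · exact Finset.mem_range.mpr (by omega)
    · obtain ⟨r, hr, rfl⟩ := Finset.mem_image.mp hb'
      rw [Finset.mem_range] at hr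
      exact Finset.mem_range.mpr (hlen (r+1) d (by omega) (le_refl d))
  rw [← Finset.prod_sdiff hsub]
  -- the boundary part
  have hinj : ∀ r1 ∈ Finset.range (d-1), ∀ r2 ∈ Finset.range (d-1),
      lsum s (r1+1) = lsum s (r2+1) → r1 = r2 := by
    intro r1 h1 r2 h2 he
    rw [Finset.mem_range] at h1 h2
    rcases Nat.lt_trichotomy r1 r2 with h | h | h
    · have := hlen (r1+1) (r2+1) (by omega) (by omega); omega
    · exact h
    · have := hlen (r2+1) (r1+1) (by omega) (by omega); omega
  have hSprod : ∏ j ∈ insert 0 B,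
        ((clList x y 0 1 (specL s t d)).getD j 1) ^ (chainAt n f j - chainAt n f (j+1))
      = (x + y) ^ (n - idx f 1) *
          ∏ r ∈ Finset.range (d-1),
            (t r * x + y) ^ (idx f (lsum s (r + 1)) - idx f (lsum s (r + 1) + 1)) := by
    rw [Finset.prod_insert h0B]
    congr 1
    · have hc0 : (clList x y 0 1 (specL s t d)).getD 0 1 = (1:A) * x + y := by
        have h := clList_getD_boundary x y d s t hs 0 1 0 (by omega)
        rw [lsum_zero, if_pos rfl] at h
        exact h
      rw [hc0, one_mul]
      congr 1
    · rw [hB, Finset.prod_image hinj]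
      refine Finset.prod_congr rfl fun r hr => ?_
      rw [Finset.mem_range] at hr
      have hc : (clList x y 0 1 (specL s t d)).getD (lsum s (r+1)) 1 = t r * x + y := by
        have h := clList_getD_boundary x y d s t hs 0 1 (r+1) (by omega)
        rw [if_neg (by omega)] at h
        rw [show (0:ℕ) + lsum s (r+1) = lsum s (r+1) by omega] at h
        rw [h, Nat.add_sub_cancel]
      rw [hc]
      congr 1
      have hpos : lsum s (r+1) ≠ 0 := by
        have := hlen 0 (r+1) (by omega) (by omega)
        rw [lsum_zero] at this; omega
      unfold chainAt
      rw [if_neg hpos, if_neg (Nat.succ_ne_zero _)]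
  rw [hSprod]
  -- the y-part
  have hy : ∀ j ∈ Finset.range (lsum s d) \ insert 0 B,
      (clList x y 0 1 (specL s t d)).getD j 1 = y := by
    intro j hj
    obtain ⟨hjr, hjn⟩ := Finset.mem_sdiff.mp hj
    rw [Finset.mem_range] at hjr
    refine clList_getD_y x y d s t hs 0 1 j (by omega) ?_
    intro r hr
    match r with
    | 0 =>
      rw [lsum_zero]
      intro hcon
      exact hjn (Finset.mem_insert.mpr (Or.inl (by omega)))
    | r+1 =>
      intro hcon
      rcases Nat.lt_or_ge r (d-1) with h | h
      · exact hjn (Finset.mem_insert.mpr (Or.inr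
          (Finset.mem_image.mpr ⟨r, Finset.mem_range.mpr h, by omega⟩)))
      · -- r+1 < d and r ≥ d-1 → r+1 = d, but j < lsum s d = lsum s (r+1)
        have : r + 1 = d := by omega
        subst this
        omega
  have e1 : ∏ j ∈ Finset.range (lsum s d) \ insert 0 B,
        ((clList x y 0 1 (specL s t d)).getD j 1) ^ (chainAt n f j - chainAt n f (j+1))
      = y ^ (∑ j ∈ Finset.range (lsum s d) \ insert 0 B, (chainAt n f j - chainAt n f (j+1))) := by
    rw [← Finset.prod_pow_eq_pow_sum]
    exact Finset.prod_congr rfl fun j hj => by rw [hy j hj]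
  rw [e1]
  -- exponent identity
  have hEXP : ∑ j ∈ Finset.range (lsum s d) \ insert 0 B, (chainAt n f j - chainAt n f (j+1))
      = (idx f 1 + ∑ r ∈ Finset.range (d - 1), idx f (lsum s (r + 1) + 1)) -
          ∑ r ∈ Finset.range d, idx f (lsum s (r + 1)) := by
    have htel : ∑ j ∈ Finset.range (lsum s d), (chainAt n f j - chainAt n f (j+1))
        = n - idx f (lsum s d) := by
      rw [sum_sub_telescope (chainAt n f) hanti (lsum s d), chainAt_zero]
      congr 1
      unfold chainAt
      rw [if_neg (by omega)]
    have hsplit : ∑ j ∈ Finset.range (lsum s d) \ insert 0 B, (chainAt n f j - chainAt n f (j+1))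
        + ∑ j ∈ insert 0 B, (chainAt n f j - chainAt n f (j+1))
        = ∑ j ∈ Finset.range (lsum s d), (chainAt n f j - chainAt n f (j+1)) :=
      Finset.sum_sdiff hsub
    have hS : ∑ j ∈ insert 0 B, (chainAt n f j - chainAt n f (j+1))
        = (n - idx f 1) + ∑ r ∈ Finset.range (d-1),
            (idx f (lsum s (r+1)) - idx f (lsum s (r+1)+1)) := by
      rw [Finset.sum_insert h0B]
      congr 1
      rw [hB, Finset.sum_image hinj]
      refine Finset.sum_congr rfl fun r hr => ?_
      rw [Finset.mem_range] at hr
      have hpos : lsum s (r+1) ≠ 0 := by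
        have := hlen 0 (r+1) (by omega) (by omega)
        rw [lsum_zero] at this; omega
      unfold chainAt
      rw [if_neg hpos, if_neg (Nat.succ_ne_zero _)]
    have hPQ : ∑ r ∈ Finset.range (d-1), (idx f (lsum s (r+1)) - idx f (lsum s (r+1)+1))
        = ∑ r ∈ Finset.range (d-1), idx f (lsum s (r+1))
          - ∑ r ∈ Finset.range (d-1), idx f (lsum s (r+1)+1) := by
      refine Finset.sum_tsub_distrib _ (fun r hr => ?_)
      refine hidx (lsum s (r+1)) (lsum s (r+1)+1) ?_ (by omega)
      have := hlen 0 (r+1) (by omega) (by rw [Finset.mem_range] at hr; omega)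
      rw [lsum_zero] at this; omega
    have hQP : ∑ r ∈ Finset.range (d-1), idx f (lsum s (r+1)+1)
        ≤ ∑ r ∈ Finset.range (d-1), idx f (lsum s (r+1)) := by
      refine Finset.sum_le_sum (fun r hr => ?_)
      refine hidx _ _ ?_ (by omega)
      have := hlen 0 (r+1) (by omega) (by rw [Finset.mem_range] at hr; omega)
      rw [lsum_zero] at this; omega
    have hf6 : ∑ r ∈ Finset.range d, idx f (lsum s (r+1))
        = (∑ r ∈ Finset.range (d-1), idx f (lsum s (r+1))) + idx f (lsum s d) := by
      have hr : Finset.range d = Finset.range (d-1+1) := by congr 1; omega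
      rw [hr, Finset.sum_range_succ, show d-1+1 = d by omega]
    have hf7 : ∑ r ∈ Finset.range d, idx f (lsum s (r+1))
        ≤ idx f 1 + ∑ r ∈ Finset.range (d-1), idx f (lsum s (r+1)+1) := by
      have hr : Finset.range d = Finset.range (d-1+1) := by congr 1; omega
      rw [hr, Finset.sum_range_succ', add_comm]
      refine add_le_add ?_ (Finset.sum_le_sum fun r hr => ?_)
      · refine hidx 1 (lsum s 1) (by omega) ?_
        have := hlen 0 1 (by omega) (by omega)
        rw [lsum_zero] at this; omega
      · rw [Finset.mem_range] at hr
        refine hidx (lsum s (r+1)+1) (lsum s (r+1+1)) ?_ ?_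
        · have := hlen 0 (r+1) (by omega) (by omega)
          rw [lsum_zero] at this; omega
        · have := hlen (r+1) (r+1+1) (by omega) (by omega)
          omega
    have hf4 : idx f 1 ≤ n := chain_idx_le hf 1 (by omega)
    have hf5 : idx f (lsum s d) ≤ idx f 1 := hidx 1 (lsum s d) (by omega) hw
    omega
  rw [hEXP]
  ring

lemma RHS_eq (x y : A) (d : ℕ) (hd : 1 ≤ d) (s : ℕ → ℕ) (hs : ∀ i < d, 1 ≤ s i)
    (t : ℕ → A) (n : ℕ) :
    ∑ f ∈ chainsIcc (lsum s d) 1 n,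
        (∏ j ∈ Finset.range (lsum s d), (idx f (j + 1) : ℚ))⁻¹ •
          ((x + y) ^ (n - idx f 1) *
            y ^ ((idx f 1 + ∑ r ∈ Finset.range (d - 1), idx f (lsum s (r + 1) + 1)) -
                  ∑ r ∈ Finset.range d, idx f (lsum s (r + 1))) *
            (∏ r ∈ Finset.range (d - 1),
              (t r * x + y) ^ (idx f (lsum s (r + 1)) - idx f (lsum s (r + 1) + 1))) *
            ((t (d - 1) * x + y) ^ (idx f (lsum s d)) - y ^ (idx f (lsum s d))))
    = Rfun y (t (d-1) * x + y) (clList x y 0 1 (specL s t d)) n := by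
  have hlen : (clList x y 0 1 (specL s t d)).length = lsum s d := by
    rw [clList_length x y d s t hs 0 1]
    omega
  have R := Rconv y (t (d-1)*x+y) (clList x y 0 1 (specL s t d)) n
  rw [hlen] at R
  rw [← R]
  refine Finset.sum_congr rfl fun f hf => ?_
  congr 1
  have hw : 1 ≤ lsum s d := lsum_pos d hd s hs
  have hz : chainAt n f (lsum s d) = idx f (lsum s d) := by
    unfold chainAt
    rw [if_neg (by omega)]
  rw [hz, RHS_prod x y d hd s hs t n f hf]

end FMPFinal

theorem main_corollary {A : Type*} [CommRing A] [Algebra ℚ A]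
    (d : ℕ) (hd : 1 ≤ d) (s : ℕ → ℕ) (hs : ∀ i < d, 1 ≤ s i)
    (t : ℕ → A) (x y : A) (n : ℕ) (hn : 1 ≤ n) :
    ∑ k ∈ Finset.Icc 1 n, (n.choose k : ℚ) •
        (x ^ k * y ^ (n - k) *
          ∑ m ∈ chainsIcc d 1 k,
            (∏ j ∈ Finset.range d, (idx m (j + 1) : ℚ) ^ s j)⁻¹ •
              ((∏ j ∈ Finset.range (d - 1), t j ^ (idx m (j + 1) - idx m (j + 2))) *
                t (d - 1) ^ (idx m d)))
      = ∑ f ∈ chainsIcc (lsum s d) 1 n,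
          (∏ j ∈ Finset.range (lsum s d), (idx f (j + 1) : ℚ))⁻¹ •
            ((x + y) ^ (n - idx f 1) *
              y ^ ((idx f 1 + ∑ r ∈ Finset.range (d - 1), idx f (lsum s (r + 1) + 1)) -
                    ∑ r ∈ Finset.range d, idx f (lsum s (r + 1))) *
              (∏ r ∈ Finset.range (d - 1),
                (t r * x + y) ^ (idx f (lsum s (r + 1)) - idx f (lsum s (r + 1) + 1))) *
              ((t (d - 1) * x + y) ^ (idx f (lsum s d)) - y ^ (idx f (lsum s d)))) := by
  rw [LHS_eq x y d hd s t n, RHS_eq x y d hd s hs t n,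
    MAIN x y (specL s t d) (specL_fst d s t hs) 0 1 n]
  have hz := zfin_specL x y (d-1) s t 1
  rw [show d-1+1 = d by omega] at hz
  rw [hz]
end
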